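/- arXiv:1805.10363 — 5 statements merged into one kernel-verified Lean document; each statement's English description precedes it below -/
import Mathlib

section
/- For every nonnegative integer n, the sum over k from 0 to n of (-1)^k · ((2k)!!/(2k+1)!!) · C(n,k) equals 1/(2n+1), where C(n,k) = n!/((n-k)! k!) is the binomial coefficient. -/
open scoped Nat

private lemma prod_odd_pos (m n : ℕ) :
    (0:ℝ) < ∏ i ∈ Finset.range (n + 1), (2 * (m + i) + 1 : ℝ) := by
  apply Finset.prod_pos
  intro i _
  positivity

private lemma gen_sum (n : ℕ) : ∀ m : ℕ,
    ∑ k ∈ Finset.range (n + 1), (-1 : ℝ) ^ k * (n.choose k : ℝ) / (2 * k + 2 * m + 1) =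
      2 ^ n * (n ! : ℝ) / ∏ i ∈ Finset.range (n + 1), (2 * (m + i) + 1 : ℝ) := by
  induction n with
  | zero =>
    intro m
    simp
  | succ n ih =>
    intro m
    have hsplit :
        ∑ k ∈ Finset.range (n + 2), (-1 : ℝ) ^ k * ((n+1).choose k : ℝ) / (2 * (k:ℝ) + 2 * (m:ℝ) + 1)
          = (∑ k ∈ Finset.range (n + 1), (-1 : ℝ) ^ k * (n.choose k : ℝ) / (2 * (k:ℝ) + 2 * (m:ℝ) + 1))
            - ∑ k ∈ Finset.range (n + 1),
                (-1 : ℝ) ^ k * (n.choose k : ℝ) / (2 * (k:ℝ) + 2 * ((m+1 : ℕ) : ℝ) + 1) := by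
      rw [Finset.sum_range_succ'
        (fun k => (-1 : ℝ) ^ k * ((n+1).choose k : ℝ) / (2 * (k:ℝ) + 2 * (m:ℝ) + 1))]
      have hterm : ∀ k ∈ Finset.range (n+1),
          (-1 : ℝ) ^ (k+1) * ((n+1).choose (k+1) : ℝ) / (2 * ((k+1 : ℕ):ℝ) + 2 * (m:ℝ) + 1)
          = (-1 : ℝ) ^ (k+1) * (n.choose (k+1) : ℝ) / (2 * ((k+1 : ℕ):ℝ) + 2 * (m:ℝ) + 1)
            - (-1 : ℝ) ^ k * (n.choose k : ℝ) / (2 * (k:ℝ) + 2 * ((m+1 : ℕ) : ℝ) + 1) := by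
        intro k _
        rw [Nat.choose_succ_succ]
        push_cast
        ring
      rw [Finset.sum_congr rfl hterm, Finset.sum_sub_distrib]
      have h2 : ∑ k ∈ Finset.range (n + 1),
          (-1 : ℝ) ^ (k+1) * (n.choose (k+1) : ℝ) / (2 * ((k+1 : ℕ):ℝ) + 2 * (m:ℝ) + 1)
          + (-1:ℝ)^0 * ((n+1).choose 0 : ℝ) / (2 * ((0:ℕ):ℝ) + 2 * (m:ℝ) + 1)
          = ∑ k ∈ Finset.range (n + 1), (-1 : ℝ) ^ k * (n.choose k : ℝ) / (2 * (k:ℝ) + 2 * (m:ℝ) + 1) := by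
        have hext : ∑ k ∈ Finset.range (n + 2), (-1 : ℝ) ^ k * (n.choose k : ℝ) / (2 * (k:ℝ) + 2 * (m:ℝ) + 1)
            = ∑ k ∈ Finset.range (n + 1), (-1 : ℝ) ^ k * (n.choose k : ℝ) / (2 * (k:ℝ) + 2 * (m:ℝ) + 1) := by
          rw [Finset.sum_range_succ (fun k => (-1 : ℝ) ^ k * (n.choose k : ℝ) / (2 * (k:ℝ) + 2 * (m:ℝ) + 1)) (n+1)]
          simp [Nat.choose_succ_self]
        rw [← hext, Finset.sum_range_succ'
          (fun k => (-1 : ℝ) ^ k * (n.choose k : ℝ) / (2 * (k:ℝ) + 2 * (m:ℝ) + 1))]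
        norm_num
      rw [← h2]
      ring
    rw [hsplit, ih m, ih (m+1)]
    set A : ℝ := ∏ i ∈ Finset.range (n + 1), (2 * ((m:ℝ) + (i:ℝ)) + 1 : ℝ) with hA
    set B : ℝ := ∏ i ∈ Finset.range (n + 1), (2 * (((m+1 : ℕ):ℝ) + (i:ℝ)) + 1 : ℝ) with hB
    have hPA : ∏ i ∈ Finset.range (n + 2), (2 * ((m:ℝ) + (i:ℝ)) + 1 : ℝ)
        = A * (2 * ((m:ℝ) + ((n:ℝ)+1)) + 1) := by
      rw [Finset.prod_range_succ]
      push_cast; ring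
    have hPB : ∏ i ∈ Finset.range (n + 2), (2 * ((m:ℝ) + (i:ℝ)) + 1 : ℝ)
        = B * (2 * (m:ℝ) + 1) := by
      rw [Finset.prod_range_succ' (fun i => (2 * ((m:ℝ) + (i:ℝ)) + 1 : ℝ))]
      have hpc : ∀ i ∈ Finset.range (n+1),
          (2 * ((m:ℝ) + ((i+1 : ℕ):ℝ)) + 1 : ℝ) = (2 * (((m+1 : ℕ):ℝ) + (i:ℝ)) + 1 : ℝ) := by
        intro i _; push_cast; ring
      rw [Finset.prod_congr rfl hpc, ← hB]
      norm_num
    have hApos : (0:ℝ) < A := by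
      rw [hA]; apply Finset.prod_pos; intro i _; positivity
    have hBpos : (0:ℝ) < B := by
      rw [hB]; apply Finset.prod_pos; intro i _; positivity
    have key : A * (2 * ((m:ℝ) + ((n:ℝ)+1)) + 1) = B * (2 * (m:ℝ) + 1) := by
      rw [← hPA, ← hPB]
    rw [hPA]
    have hA0 : A ≠ 0 := ne_of_gt hApos
    have hB0 : B ≠ 0 := ne_of_gt hBpos
    have hd : (2 * ((m:ℝ) + ((n:ℝ)+1)) + 1) ≠ 0 := by positivity
    rw [Nat.factorial_succ]
    push_cast
    rw [div_sub_div _ _ hA0 hB0, div_eq_div_iff (mul_ne_zero hA0 hB0) (mul_ne_zero hA0 hd)]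
    linear_combination (-(2^n * (n ! : ℝ) * A)) * key

private lemma df_ratio (k : ℕ) :
    ((2 * k)‼ : ℝ) / ((2 * k + 1)‼ : ℝ)
      = ∑ j ∈ Finset.range (k + 1), (-1 : ℝ) ^ j * (k.choose j : ℝ) / (2 * (j:ℝ) + 1) := by
  have h := gen_sum k 0
  simp only [Nat.cast_zero, mul_zero, add_zero, zero_add] at h
  rw [h]
  have hodd : (2 * k + 1)‼ = ∏ i ∈ Finset.range (k + 1), (2 * i + 1) := by
    rw [Nat.doubleFactorial_eq_prod_odd,
      Finset.prod_range_succ' (fun i => 2 * i + 1)]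
    simp
  have heven : ((2 * k)‼ : ℝ) = 2 ^ k * (k ! : ℝ) := by
    rw [Nat.doubleFactorial_two_mul]; push_cast; ring
  rw [heven, hodd]
  push_cast
  rfl

private lemma orth (n j : ℕ) (hj : j ≤ n) :
    ∑ k ∈ Finset.range (n + 1), (-1 : ℝ) ^ k * (n.choose k : ℝ) * (k.choose j : ℝ)
      = if j = n then (-1 : ℝ) ^ n else 0 := by
  have h1 : ∑ k ∈ Finset.range (n + 1), (-1 : ℝ) ^ k * (n.choose k : ℝ) * (k.choose j : ℝ)
      = ∑ k ∈ Finset.Ico j (n + 1), (-1 : ℝ) ^ k * (n.choose k : ℝ) * (k.choose j : ℝ) := by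
    rw [Finset.range_eq_Ico,
      ← Finset.sum_Ico_consecutive _ (Nat.zero_le j) (by omega)]
    have hz : ∑ k ∈ Finset.Ico 0 j, (-1 : ℝ) ^ k * (n.choose k : ℝ) * (k.choose j : ℝ) = 0 := by
      apply Finset.sum_eq_zero
      intro k hk
      rw [Nat.choose_eq_zero_of_lt (Finset.mem_Ico.mp hk).2]
      simp
    rw [hz, zero_add]
  rw [h1, Finset.sum_Ico_eq_sum_range]
  have h2 : ∀ i ∈ Finset.range (n + 1 - j),
      (-1 : ℝ) ^ (j + i) * (n.choose (j + i) : ℝ) * ((j + i).choose j : ℝ)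
        = ((-1 : ℝ) ^ j * (n.choose j : ℝ)) * ((-1 : ℝ) ^ i * ((n - j).choose i : ℝ)) := by
    intro i hi
    have hin : j + i ≤ n := by
      have := Finset.mem_range.mp hi; omega
    have hmul := Nat.choose_mul (n := n) (Nat.le_add_right j i)
    rw [Nat.add_sub_cancel_left] at hmul
    have : ((n.choose (j + i)) : ℝ) * ((j + i).choose j : ℝ)
        = (n.choose j : ℝ) * ((n - j).choose i : ℝ) := by
      exact_mod_cast congrArg (Nat.cast : ℕ → ℝ) hmul
    rw [pow_add, mul_assoc, mul_assoc]
    rw [show (-1:ℝ)^i * (↑(n.choose (j+i)) * ↑((j+i).choose j))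
        = (↑(n.choose (j + i)) * ↑((j + i).choose j)) * (-1:ℝ)^i by ring, this]
    ring
  rw [Finset.sum_congr rfl h2, ← Finset.mul_sum]
  have h3 : ∑ i ∈ Finset.range (n + 1 - j), (-1 : ℝ) ^ i * ((n - j).choose i : ℝ)
      = if n - j = 0 then 1 else 0 := by
    have := Int.alternating_sum_range_choose (n := n - j)
    have hcast := congrArg (Int.cast : ℤ → ℝ) this
    push_cast at hcast
    rw [show n + 1 - j = (n - j) + 1 by omega]
    simpa using hcast
  rw [h3]
  by_cases hjn : j = n
  · subst hjn
    simp
  · rw [if_neg (by omega), if_neg hjn, mul_zero]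

theorem alternating_doubleFactorial_sum (n : ℕ) :
    ∑ k ∈ Finset.range (n + 1),
        (-1 : ℝ) ^ k * (((2 * k)‼ : ℝ) / ((2 * k + 1)‼ : ℝ)) * (n.choose k : ℝ) =
      1 / (2 * n + 1) := by
  have step1 : ∑ k ∈ Finset.range (n + 1),
        (-1 : ℝ) ^ k * (((2 * k)‼ : ℝ) / ((2 * k + 1)‼ : ℝ)) * (n.choose k : ℝ)
      = ∑ k ∈ Finset.range (n + 1), ∑ j ∈ Finset.range (n + 1),
          (-1 : ℝ) ^ k * (n.choose k : ℝ) * (k.choose j : ℝ)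
            * ((-1 : ℝ) ^ j / (2 * (j:ℝ) + 1)) := by
    apply Finset.sum_congr rfl
    intro k hk
    rw [df_ratio k]
    have hext : ∑ j ∈ Finset.range (k + 1),
          (-1 : ℝ) ^ k * (n.choose k : ℝ) * (k.choose j : ℝ) * ((-1 : ℝ) ^ j / (2 * (j:ℝ) + 1))
        = ∑ j ∈ Finset.range (n + 1),
          (-1 : ℝ) ^ k * (n.choose k : ℝ) * (k.choose j : ℝ) * ((-1 : ℝ) ^ j / (2 * (j:ℝ) + 1)) := by
      apply Finset.sum_subset
      · exact Finset.range_subset_range.mpr (by have := Finset.mem_range.mp hk; omega)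
      · intro j _ hj
        have hkj : k < j := by
          simp only [Finset.mem_range, not_lt] at hj; omega
        have h0 : k.choose j = 0 := Nat.choose_eq_zero_of_lt hkj
        rw [h0]
        simp
    rw [← hext, Finset.mul_sum, Finset.sum_mul]
    apply Finset.sum_congr rfl
    intro j _
    ring
  rw [step1, Finset.sum_comm]
  have step2 : ∀ j ∈ Finset.range (n + 1),
      ∑ k ∈ Finset.range (n + 1),
          (-1 : ℝ) ^ k * (n.choose k : ℝ) * (k.choose j : ℝ) * ((-1 : ℝ) ^ j / (2 * (j:ℝ) + 1))
        = (if j = n then (-1 : ℝ) ^ n else 0) * ((-1 : ℝ) ^ j / (2 * (j:ℝ) + 1)) := by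
    intro j hj
    rw [← Finset.sum_mul, orth n j (by have := Finset.mem_range.mp hj; omega)]
  rw [Finset.sum_congr rfl step2]
  simp only [ite_mul, zero_mul]
  rw [Finset.sum_ite_eq' (Finset.range (n + 1)) n
    (fun j => (-1 : ℝ) ^ n * ((-1 : ℝ) ^ j / (2 * (j:ℝ) + 1)))]
  rw [if_pos (Finset.self_mem_range_succ n)]
  have hsq : (-1 : ℝ) ^ n * (-1 : ℝ) ^ n = 1 := by
    rw [← pow_add]
    exact Even.neg_one_pow ⟨n, by ring⟩
  rw [← mul_div_assoc, hsq]
end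

section
/- For every nonnegative integer n, the identity Σ_{k=1}^{n+1} (-2)^k / ((n-k+1)! (2k-1)!!) + 2/((2n+1) n!) = 0 holds. -/
open scoped Nat

lemma aux_partial (n : ℕ) : ∀ j, j ≤ n →
    ∑ k ∈ Finset.Icc 1 (j + 1),
        (-2 : ℝ) ^ k / (((n + 1 - k)! : ℝ) * ((2 * k - 1)‼ : ℝ))
      = -2 / ((2 * (n : ℝ) + 1) * (n ! : ℝ))
        + 2 * (-2 : ℝ) ^ (j + 1) * ((n - j : ℕ) : ℝ)
            / ((2 * (n : ℝ) + 1) * (((n - j)! : ℕ) : ℝ) * ((2 * j + 1)‼ : ℝ)) := by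
  intro j
  induction j with
  | zero =>
    intro _
    rw [Finset.Icc_self, Finset.sum_singleton]
    have hn : ((n ! : ℕ) : ℝ) ≠ 0 := by positivity
    have h2 : (2 * (n : ℝ) + 1) ≠ 0 := by positivity
    simp only [Nat.sub_zero, pow_one]
    norm_num [Nat.doubleFactorial]
    field_simp
    ring
  | succ j ih =>
    intro hj
    have hj' : j ≤ n := by omega
    obtain ⟨m, hm⟩ : ∃ m, n = j + 1 + m := ⟨n - (j + 1), by omega⟩
    rw [Finset.sum_Icc_succ_top (by omega : 1 ≤ j + 1 + 1), ih hj']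
    have e1 : n + 1 - (j + 1 + 1) = m := by omega
    have e2 : n - j = m + 1 := by omega
    have e3 : n - (j + 1) = m := by omega
    have e4 : 2 * (j + 1 + 1) - 1 = (2 * j + 1) + 2 := by omega
    have e5 : 2 * (j + 1) + 1 = (2 * j + 1) + 2 := by omega
    rw [e1, e2, e3, e4, e5, Nat.doubleFactorial_add_two]
    have hdf : ((2 * j + 1)‼ : ℝ) ≠ 0 := by
      exact_mod_cast (Nat.doubleFactorial_pos _).ne'
    have hmf : ((m ! : ℕ) : ℝ) ≠ 0 := by positivity
    have h2 : (2 * (n : ℝ) + 1) ≠ 0 := by positivity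
    have hfs : ((m + 1)! : ℝ) = (m + 1) * (m ! : ℝ) := by
      push_cast [Nat.factorial_succ]; ring
    rw [hfs]
    have hn : (n : ℝ) = (j : ℝ) + 1 + m := by exact_mod_cast congrArg (Nat.cast : ℕ → ℝ) hm
    push_cast
    rw [hn]
    field_simp
    ring

theorem basic_identity (n : ℕ) :
    ∑ k ∈ Finset.Icc 1 (n + 1),
        (-2 : ℝ) ^ k / (((n - k + 1)! : ℝ) * ((2 * k - 1)‼ : ℝ))
      + 2 / ((2 * n + 1) * (n ! : ℝ)) = 0 := by
  have hsum : ∑ k ∈ Finset.Icc 1 (n + 1),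
      (-2 : ℝ) ^ k / (((n - k + 1)! : ℝ) * ((2 * k - 1)‼ : ℝ))
    = ∑ k ∈ Finset.Icc 1 (n + 1),
      (-2 : ℝ) ^ k / (((n + 1 - k)! : ℝ) * ((2 * k - 1)‼ : ℝ)) := by
    refine Finset.sum_congr rfl fun k hk => ?_
    have hk' : 1 ≤ k ∧ k ≤ n + 1 := Finset.mem_Icc.mp hk
    have : (n - k + 1)! = (n + 1 - k)! := by
      rcases Nat.lt_or_ge k (n + 1) with h | h
      · congr 1; omega
      · have : k = n + 1 := by omega
        subst this; simp
    rw [this]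
  rw [hsum, aux_partial n n le_rfl]
  simp only [Nat.sub_self, Nat.cast_zero, mul_zero, zero_div, Nat.cast_ofNat]
  have hn : ((n ! : ℕ) : ℝ) ≠ 0 := by positivity
  have h2 : (2 * (n : ℝ) + 1) ≠ 0 := by positivity
  field_simp
  ring
end

section
/- Fix a real number α > 0 and define B_n : (0,∞) → ℝ recursively by B_0(r) = -erf(√α · r)/r and B_{n+1}(r) = (1/r²)·((2n+1)·B_n(r) + (2α)^{n+1}/√(απ) · exp(-α r²)). Then for every nonnegative integer n, the limit of B_n(r) as r → 0⁺ exists and equals -(α^{n+1/2}/√π) · 2^{n+1}/(2n+1). -/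
open scoped Nat

/-- The error function `erf(x) = (2/√π) ∫₀ˣ exp(-t²) dt`. -/
noncomputable def erf (x : ℝ) : ℝ :=
  (2 / Real.sqrt Real.pi) * ∫ t in (0:ℝ)..x, Real.exp (-t ^ 2)

/-- The recursively defined functions `B_n` from the paper (depending on `α`). -/
noncomputable def B (α : ℝ) : ℕ → ℝ → ℝ
  | 0, r => -erf (Real.sqrt α * r) / r
  | n + 1, r => (1 / r ^ 2) * ((2 * n + 1) * B α n r
      + (2 * α) ^ (n + 1) / Real.sqrt (α * Real.pi) * Real.exp (-α * r ^ 2))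

open Real intervalIntegral

lemma cont_integrand (n : ℕ) : Continuous (fun t : ℝ => t ^ n * Real.exp (-t ^ 2)) := by
  continuity

lemma ibp (n : ℕ) (x : ℝ) :
    ∫ t in (0:ℝ)..x, t ^ (2*n+2) * Real.exp (-t ^ 2)
      = -(x ^ (2*n+1) / 2) * Real.exp (-x ^ 2)
        + ((2*n+1 : ℝ)/2) * ∫ t in (0:ℝ)..x, t ^ (2*n) * Real.exp (-t ^ 2) := by
  have hderiv : ∀ t : ℝ, HasDerivAt (fun t : ℝ => -(t ^ (2*n+1) / 2) * Real.exp (-t ^ 2))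
      (t ^ (2*n+2) * Real.exp (-t ^ 2) - ((2*n+1 : ℝ)/2) * (t ^ (2*n) * Real.exp (-t ^ 2))) t := by
    intro t
    have h1 : HasDerivAt (fun t : ℝ => t ^ (2*n+1)) ((2*n+1 : ℝ) * t ^ (2*n)) t := by
      simpa using hasDerivAt_pow (2*n+1) t
    have h2 : HasDerivAt (fun t : ℝ => Real.exp (-t ^ 2)) ((-2*t) * Real.exp (-t ^ 2)) t := by
      have : HasDerivAt (fun t : ℝ => -t ^ 2) (-2*t) t := by
        simpa using (hasDerivAt_pow 2 t).fun_neg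
      simpa [mul_comm] using this.exp
    have := ((h1.div_const 2).fun_neg.fun_mul h2)
    refine this.congr_deriv ?_
    ring
  have hint : ∀ m : ℕ, IntervalIntegrable (fun t : ℝ => t ^ m * Real.exp (-t ^ 2)) MeasureTheory.volume 0 x :=
    fun m => (cont_integrand m).intervalIntegrable _ _
  have key := intervalIntegral.integral_eq_sub_of_hasDerivAt (f := fun t : ℝ => -(t ^ (2*n+1) / 2) * Real.exp (-t ^ 2))
    (fun t _ => hderiv t) (((hint (2*n+2)).sub ((hint (2*n)).const_mul _)))
  rw [intervalIntegral.integral_sub (hint (2*n+2)) ((hint (2*n)).const_mul _)] at key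
  rw [intervalIntegral.integral_const_mul] at key
  have h0 : (0:ℝ) ^ (2*n+1) = 0 := zero_pow (by omega)
  simp only [h0] at key
  simp at key
  linarith [key]

lemma B_eq (α : ℝ) (hα : 0 < α) (n : ℕ) (r : ℝ) (hr : 0 < r) :
    B α n r = -(2 ^ (n+1) / Real.sqrt Real.pi)
      * (∫ t in (0:ℝ)..(Real.sqrt α * r), t ^ (2*n) * Real.exp (-t ^ 2)) / r ^ (2*n+1) := by
  have hsa : (0:ℝ) < Real.sqrt α := Real.sqrt_pos.mpr hα
  have hsp : (0:ℝ) < Real.sqrt Real.pi := Real.sqrt_pos.mpr Real.pi_pos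
  have hsa2 : Real.sqrt α * Real.sqrt α = α := Real.mul_self_sqrt hα.le
  induction n with
  | zero =>
    simp only [B, erf]
    rw [show (2*0 : ℕ) = 0 from rfl]
    simp only [pow_zero, one_mul, pow_one]
    ring
  | succ n ih =>
    have hx2 : (Real.sqrt α * r) ^ 2 = α * r ^ 2 := by
      rw [mul_pow, Real.sq_sqrt hα.le]
    have hxp : (Real.sqrt α * r) ^ (2*n+1) = α ^ n * Real.sqrt α * r ^ (2*n+1) := by
      rw [mul_pow, pow_succ, pow_mul, Real.sq_sqrt hα.le]
    have key := ibp n (Real.sqrt α * r)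
    simp only [B, ih]
    rw [show 2*(n+1) = 2*n+2 from by ring] 
    rw [key, hx2, hxp]
    have hmul : Real.sqrt (α * Real.pi) = Real.sqrt α * Real.sqrt Real.pi :=
      Real.sqrt_mul hα.le _
    rw [hmul]
    set s := Real.sqrt α with hs
    rw [show α = s^2 by rw [hs, Real.sq_sqrt hα.le]]
    have hs0 : s ≠ 0 := ne_of_gt hsa
    field_simp
    ring

lemma J_upper (n : ℕ) (x : ℝ) (hx : 0 ≤ x) :
    ∫ t in (0:ℝ)..x, t ^ (2*n) * Real.exp (-t ^ 2) ≤ x ^ (2*n+1) / (2*n+1) := by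
  have h1 : ∫ t in (0:ℝ)..x, t ^ (2*n) = x ^ (2*n+1) / (2*n+1) := by
    rw [integral_pow]; simp
  rw [← h1]
  apply intervalIntegral.integral_mono_on hx ((cont_integrand (2*n)).intervalIntegrable _ _)
    ((continuous_pow (2*n)).intervalIntegrable _ _)
  intro t ht
  have h2 : Real.exp (-t ^ 2) ≤ 1 := Real.exp_le_one_iff.mpr (neg_nonpos.mpr (sq_nonneg t))
  have h3 : (0:ℝ) ≤ t ^ (2*n) := pow_nonneg ht.1 _
  nlinarith

lemma J_lower (n : ℕ) (x : ℝ) (hx : 0 ≤ x) :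
    x ^ (2*n+1) / (2*n+1) - x ^ (2*n+3) / (2*n+3)
      ≤ ∫ t in (0:ℝ)..x, t ^ (2*n) * Real.exp (-t ^ 2) := by
  have h1 : ∫ t in (0:ℝ)..x, (t ^ (2*n) - t ^ (2*n+2))
      = x ^ (2*n+1) / (2*n+1) - x ^ (2*n+3) / (2*n+3) := by
    rw [intervalIntegral.integral_sub ((continuous_pow (2*n)).intervalIntegrable _ _)
      ((continuous_pow (2*n+2)).intervalIntegrable _ _), integral_pow, integral_pow]
    push_cast
    rw [show 2*n+2+1 = 2*n+3 from by ring]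
    push_cast
    simp
    ring
  rw [← h1]
  apply intervalIntegral.integral_mono_on hx
    (((continuous_pow (2*n)).sub (continuous_pow (2*n+2))).intervalIntegrable _ _)
    ((cont_integrand (2*n)).intervalIntegrable _ _)
  intro t ht
  have h2 : -t^2 + 1 ≤ Real.exp (-t ^ 2) := Real.add_one_le_exp _
  have h3 : (0:ℝ) ≤ t ^ (2*n) := pow_nonneg ht.1 _
  have h4 : t^(2*n+2) = t^(2*n)*t^2 := by ring
  show t ^ (2*n) - t ^ (2*n+2) ≤ _
  nlinarith [mul_le_mul_of_nonneg_left h2 h3]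

theorem B_tendsto_at_zero (α : ℝ) (hα : 0 < α) (n : ℕ) :
    Filter.Tendsto (B α n) (nhdsWithin 0 (Set.Ioi 0))
      (nhds (-(α ^ ((n : ℝ) + 1 / 2) / Real.sqrt Real.pi) * (2 ^ (n + 1) / (2 * n + 1)))) := by
  have hsa : (0:ℝ) < Real.sqrt α := Real.sqrt_pos.mpr hα
  have hsp : (0:ℝ) < Real.sqrt Real.pi := Real.sqrt_pos.mpr Real.pi_pos
  set c : ℝ := α ^ n * Real.sqrt α / (2*n+1) with hc
  set g : ℝ → ℝ := fun r =>
    (∫ t in (0:ℝ)..(Real.sqrt α * r), t ^ (2*n) * Real.exp (-t ^ 2)) / r ^ (2*n+1) with hg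
  have hgc : Filter.Tendsto g (nhdsWithin 0 (Set.Ioi 0)) (nhds c) := by
    have hlow : Filter.Tendsto (fun r : ℝ => c - α ^ (n+1) * Real.sqrt α * r^2 / (2*n+3))
        (nhdsWithin 0 (Set.Ioi 0)) (nhds c) := by
      have : Filter.Tendsto (fun r : ℝ => c - α ^ (n+1) * Real.sqrt α * r^2 / (2*n+3))
          (nhds 0) (nhds (c - α ^ (n+1) * Real.sqrt α * 0^2 / (2*n+3))) := by
        apply Continuous.tendsto; continuity
      simpa using this.mono_left nhdsWithin_le_nhds
    apply tendsto_of_tendsto_of_tendsto_of_le_of_le' hlow tendsto_const_nhds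
    · filter_upwards [self_mem_nhdsWithin] with r hr
      have hr : (0:ℝ) < r := hr
      have hx : (0:ℝ) ≤ Real.sqrt α * r := by positivity
      have hJ := J_lower n (Real.sqrt α * r) hx
      have hxp : (Real.sqrt α * r) ^ (2*n+1) = α ^ n * Real.sqrt α * r ^ (2*n+1) := by
        rw [mul_pow, pow_succ, pow_mul, Real.sq_sqrt hα.le]
      have hxp3 : (Real.sqrt α * r) ^ (2*n+3) = α ^ (n+1) * Real.sqrt α * r ^ (2*n+3) := by
        rw [mul_pow, show 2*n+3 = 2*(n+1)+1 from by ring, pow_succ, pow_mul, Real.sq_sqrt hα.le]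
      rw [hxp, hxp3] at hJ
      show _ ≤ (∫ t in (0:ℝ)..(Real.sqrt α * r), t ^ (2*n) * Real.exp (-t ^ 2)) / r ^ (2*n+1)
      rw [le_div_iff₀ (by positivity)]
      calc (c - α ^ (n+1) * Real.sqrt α * r^2 / (2*n+3)) * r ^ (2*n+1)
          = (α ^ n * Real.sqrt α * r ^ (2*n+1) / (2*n+1)
            - α ^ (n+1) * Real.sqrt α * r ^ (2*n+3) / (2*n+3)) := by
            rw [hc]; field_simp; ring
        _ ≤ _ := hJ
    · filter_upwards [self_mem_nhdsWithin] with r hr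
      have hr : (0:ℝ) < r := hr
      have hx : (0:ℝ) ≤ Real.sqrt α * r := by positivity
      have hJ := J_upper n (Real.sqrt α * r) hx
      have hxp : (Real.sqrt α * r) ^ (2*n+1) = α ^ n * Real.sqrt α * r ^ (2*n+1) := by
        rw [mul_pow, pow_succ, pow_mul, Real.sq_sqrt hα.le]
      rw [hxp] at hJ
      show (∫ t in (0:ℝ)..(Real.sqrt α * r), t ^ (2*n) * Real.exp (-t ^ 2)) / r ^ (2*n+1) ≤ _
      rw [div_le_iff₀ (by positivity)]
      calc (∫ t in (0:ℝ)..(Real.sqrt α * r), t ^ (2*n) * Real.exp (-t ^ 2))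
          ≤ α ^ n * Real.sqrt α * r ^ (2*n+1) / (2*n+1) := hJ
        _ = c * r ^ (2*n+1) := by rw [hc]; ring
  have hmain : Filter.Tendsto (fun r => -(2 ^ (n+1) / Real.sqrt Real.pi) * g r)
      (nhdsWithin 0 (Set.Ioi 0)) (nhds (-(2 ^ (n+1) / Real.sqrt Real.pi) * c)) :=
    hgc.const_mul _
  have heq : -(2 ^ (n+1) / Real.sqrt Real.pi) * c
      = -(α ^ ((n : ℝ) + 1 / 2) / Real.sqrt Real.pi) * (2 ^ (n + 1) / (2 * n + 1)) := by
    have hrpow : α ^ ((n : ℝ) + 1 / 2) = α ^ n * Real.sqrt α := by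
      rw [Real.rpow_add hα, Real.rpow_natCast, ← Real.sqrt_eq_rpow]
    rw [hrpow, hc]
    field_simp
  rw [← heq]
  apply hmain.congr'
  filter_upwards [self_mem_nhdsWithin] with r hr
  rw [B_eq α hα n r hr, hg]
  ring
end

section
/- Fix a real number α > 0 and define B_n : (0,∞) → ℝ recursively by B_0(r) = -erf(√α · r)/r and B_{n+1}(r) = (1/r²)·((2n+1)·B_n(r) + (2α)^{n+1}/√(απ) · exp(-α r²)). Then for every nonnegative integer n and every r > 0, B_n is differentiable at r and dB_n/dr (r) = -r · B_{n+1}(r). -/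
open scoped Nat

lemma erf_hasDerivAt (x : ℝ) :
    HasDerivAt erf (2 / Real.sqrt Real.pi * Real.exp (-x ^ 2)) x := by
  have hc : Continuous fun t : ℝ => Real.exp (-t ^ 2) := by continuity
  have h : HasDerivAt (fun y => ∫ t in (0:ℝ)..y, Real.exp (-t ^ 2))
      (Real.exp (-x ^ 2)) x :=
    intervalIntegral.integral_hasDerivAt_right (hc.intervalIntegrable _ _)
      (hc.stronglyMeasurableAtFilter _ _) hc.continuousAt
  exact h.const_mul (2 / Real.sqrt Real.pi)

theorem B_hasDerivAt (α : ℝ) (hα : 0 < α) (n : ℕ) (r : ℝ) (hr : 0 < r) :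
    HasDerivAt (B α n) (-r * B α (n + 1) r) r := by
  have hsa : Real.sqrt α ≠ 0 := by positivity
  have hsp : Real.sqrt Real.pi ≠ 0 := by positivity
  have hsap : Real.sqrt (α * Real.pi) = Real.sqrt α * Real.sqrt Real.pi :=
    Real.sqrt_mul hα.le _
  have hsq : Real.sqrt α * Real.sqrt α = α := Real.mul_self_sqrt hα.le
  induction n with
  | zero =>
    have hin : HasDerivAt (fun y : ℝ => Real.sqrt α * y) (Real.sqrt α) r := by
      simpa using (hasDerivAt_id r).const_mul (Real.sqrt α)
    have h1 : HasDerivAt (fun r : ℝ => erf (Real.sqrt α * r))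
        (2 / Real.sqrt Real.pi * Real.exp (-(Real.sqrt α * r) ^ 2) * Real.sqrt α) r :=
      (erf_hasDerivAt _).comp r hin
    have h2 := (h1.neg.div (hasDerivAt_id r) hr.ne')
    have he : (-(Real.sqrt α * r) ^ 2) = -α * r ^ 2 := by
      rw [mul_pow]; rw [sq, hsq]; ring
    rw [he] at h2
    convert (show HasDerivAt (B α 0) _ r from h2) using 1
    show -r * ((1 / r ^ 2) * ((2 * (0:ℕ) + 1) * (-erf (Real.sqrt α * r) / r)
      + (2 * α) ^ (0 + 1) / Real.sqrt (α * Real.pi) * Real.exp (-α * r ^ 2))) = _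
    rw [hsap]
    simp only [Pi.neg_apply, id]
    field_simp
    ring_nf
    rw [Real.sq_sqrt hα.le]; ring
  | succ n ih =>
    set e := fun r : ℝ => Real.exp (-α * r ^ 2) with he
    set C := (2 * α) ^ (n + 1) / Real.sqrt (α * Real.pi) with hC
    have hexp : HasDerivAt e (Real.exp (-α * r ^ 2) * (-α * (2 * r))) r :=
      HasDerivAt.exp (by simpa using (hasDerivAt_pow 2 r).const_mul (-α))
    have hinv : HasDerivAt (fun r : ℝ => 1 / r ^ 2)
        ((0 * r ^ 2 - 1 * (2 * r ^ 1)) / (r ^ 2) ^ 2) r :=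
      (hasDerivAt_const r 1).div (hasDerivAt_pow 2 r) (by positivity)
    have hsum : HasDerivAt (fun r => (2 * (n:ℝ) + 1) * B α n r + C * e r)
        ((2 * (n:ℝ) + 1) * (-r * B α (n + 1) r) + C * (Real.exp (-α * r ^ 2) * (-α * (2 * r)))) r :=
      (ih.const_mul _).add (hexp.const_mul C)
    have hmul := hinv.mul hsum
    have hB : B α (n + 1) = fun r => (1 / r ^ 2) * ((2 * (n:ℝ) + 1) * B α n r + C * e r) := rfl
    rw [hB]
    convert (show HasDerivAt (fun r => (1 / r ^ 2) * ((2 * (n:ℝ) + 1) * B α n r + C * e r)) _ r from hmul) using 1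
    have hBr : B α (n + 1) r = (1 / r ^ 2) * ((2 * (n:ℝ) + 1) * B α n r + C * e r) := by
      rw [hB]
    show -r * ((1 / r ^ 2) * ((2 * (n + 1 : ℕ) + 1) * B α (n + 1) r
      + (2 * α) ^ (n + 1 + 1) / Real.sqrt (α * Real.pi) * Real.exp (-α * r ^ 2))) = _
    rw [hBr, hC, pow_succ]
    have hne : Real.sqrt (α * Real.pi) ≠ 0 := by positivity
    push_cast
    field_simp
    ring
end

section
/- For every nonnegative integer n, the sum Σ_{k=0}^{n} (-2)^k · C(n,k) · k!/(2k+1)! · (2^k k!) simplifies via the identity Σ_{k=0}^n (-1)^k 2^k k! C(n,k)/(2k+1)!! = 1/(2n+1). -/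
open scoped Nat
open Finset

noncomputable def auxProd (c k : ℕ) : ℝ :=
  ∏ i ∈ Finset.range k, (2 * (i : ℝ) + 2) / (2 * i + 2 * c + 3)

lemma auxProd_succ (c k : ℕ) :
    auxProd c (k + 1) = auxProd c k * ((2 * k + 2) / (2 * k + 2 * c + 3)) := by
  unfold auxProd
  rw [Finset.prod_range_succ]

lemma auxProd_shift (c k : ℕ) :
    auxProd (c + 1) k * (2 * k + 2 * c + 3) = auxProd c k * (2 * c + 3) := by
  induction k with
  | zero => simp [auxProd]
  | succ k ih =>
    have h1 : (2 * (k : ℝ) + 2 * c + 3) ≠ 0 := by positivity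
    have h2 : (2 * (k : ℝ) + 2 * c + 5) ≠ 0 := by positivity
    rw [auxProd_succ, auxProd_succ]
    push_cast
    have e1 : (2 * ((k:ℝ) + 1) + 2 * c + 3) = 2 * k + 2 * c + 5 := by ring
    have e2 : (2 * (k:ℝ) + 2 * (c + 1) + 3) = 2 * k + 2 * c + 5 := by ring
    rw [e1, e2]
    field_simp
    nlinarith [ih]

lemma auxProd_diff (c k : ℕ) :
    auxProd c k - auxProd c (k + 1) = (2 * c + 1) / (2 * c + 3) * auxProd (c + 1) k := by
  have h1 : (2 * (k : ℝ) + 2 * c + 3) ≠ 0 := by positivity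
  have h3 : (2 * (c : ℝ) + 3) ≠ 0 := by positivity
  rw [auxProd_succ]
  have := auxProd_shift c k
  field_simp
  nlinarith [this]

lemma sum_auxProd (n : ℕ) : ∀ c : ℕ,
    ∑ k ∈ Finset.range (n + 1), (-1 : ℝ) ^ k * (n.choose k : ℝ) * auxProd c k
      = (2 * c + 1) / (2 * n + 2 * c + 1) := by
  induction n with
  | zero =>
    intro c
    have h : (2 * (c : ℝ) + 1) ≠ 0 := by positivity
    simp [auxProd]
    rw [eq_comm, div_self h]
  | succ n ih =>
    intro c
    have hU : ∑ k ∈ Finset.range (n + 1),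
          (-1 : ℝ) ^ k * (n.choose (k + 1) : ℝ) * auxProd c (k + 1)
        = ∑ k ∈ Finset.range n,
          (-1 : ℝ) ^ k * (n.choose (k + 1) : ℝ) * auxProd c (k + 1) := by
      rw [Finset.sum_range_succ]
      simp [Nat.choose_succ_self]
    have hS : ∑ k ∈ Finset.range (n + 1), (-1 : ℝ) ^ k * (n.choose k : ℝ) * auxProd c k
        = 1 - ∑ k ∈ Finset.range n,
            (-1 : ℝ) ^ k * (n.choose (k + 1) : ℝ) * auxProd c (k + 1) := by
      rw [Finset.sum_range_succ' (fun k => (-1 : ℝ) ^ k * (n.choose k : ℝ) * auxProd c k) n]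
      have : ∀ k ∈ Finset.range n,
          (-1 : ℝ) ^ (k + 1) * (n.choose (k + 1) : ℝ) * auxProd c (k + 1)
          = -((-1 : ℝ) ^ k * (n.choose (k + 1) : ℝ) * auxProd c (k + 1)) := by
        intro k _; ring
      rw [Finset.sum_congr rfl this, Finset.sum_neg_distrib]
      have h0 : auxProd c 0 = 1 := by simp [auxProd]
      simp [h0]
      ring
    have key : ∑ k ∈ Finset.range (n + 2),
          (-1 : ℝ) ^ k * ((n + 1).choose k : ℝ) * auxProd c k
        = ∑ k ∈ Finset.range (n + 1),
            (-1 : ℝ) ^ k * (n.choose k : ℝ) * (auxProd c k - auxProd c (k + 1)) := by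
      rw [Finset.sum_range_succ'
        (fun k => (-1 : ℝ) ^ k * ((n + 1).choose k : ℝ) * auxProd c k) (n + 1)]
      have expand : ∀ k ∈ Finset.range (n + 1),
          (-1 : ℝ) ^ (k + 1) * ((n + 1).choose (k + 1) : ℝ) * auxProd c (k + 1)
          = -((-1 : ℝ) ^ k * (n.choose k : ℝ) * auxProd c (k + 1))
            - (-1 : ℝ) ^ k * (n.choose (k + 1) : ℝ) * auxProd c (k + 1) := by
        intro k _
        rw [Nat.choose_succ_succ]
        push_cast
        ring
      rw [Finset.sum_congr rfl expand]
      have split : ∀ k ∈ Finset.range (n + 1),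
          (-1 : ℝ) ^ k * (n.choose k : ℝ) * (auxProd c k - auxProd c (k + 1))
          = (-1 : ℝ) ^ k * (n.choose k : ℝ) * auxProd c k
            - (-1 : ℝ) ^ k * (n.choose k : ℝ) * auxProd c (k + 1) := by
        intro k _; ring
      have expand2 : ∀ k ∈ Finset.range (n + 1),
          (-((-1 : ℝ) ^ k * (n.choose k : ℝ) * auxProd c (k + 1))
            - (-1 : ℝ) ^ k * (n.choose (k + 1) : ℝ) * auxProd c (k + 1))
          = -(((-1 : ℝ) ^ k * (n.choose k : ℝ) * auxProd c (k + 1))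
            + ((-1 : ℝ) ^ k * (n.choose (k + 1) : ℝ) * auxProd c (k + 1))) := by
        intro k _; ring
      rw [Finset.sum_congr rfl expand2, Finset.sum_neg_distrib, Finset.sum_add_distrib, hU]
      rw [Finset.sum_congr rfl split, Finset.sum_sub_distrib, hS]
      have h0 : auxProd c 0 = 1 := by simp [auxProd]
      simp [h0]
      ring
    have diff : ∀ k ∈ Finset.range (n + 1),
        (-1 : ℝ) ^ k * (n.choose k : ℝ) * (auxProd c k - auxProd c (k + 1))
        = (2 * c + 1) / (2 * c + 3) * ((-1 : ℝ) ^ k * (n.choose k : ℝ) * auxProd (c + 1) k) := by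
      intro k _
      rw [auxProd_diff]
      ring
    rw [key, Finset.sum_congr rfl diff, ← Finset.mul_sum, ih (c + 1)]
    have h1 : (2 * (c : ℝ) + 3) ≠ 0 := by positivity
    have h2 : (2 * (n : ℝ) + 2 * c + 3) ≠ 0 := by positivity
    have h3 : (2 * ((n : ℝ) + 1) + 2 * c + 1) ≠ 0 := by positivity
    push_cast
    rw [div_mul_div_comm]
    rw [show (2:ℝ) * n + 2 * (c + 1) + 1 = 2 * n + 2 * c + 3 by ring,
        show (2:ℝ) * (c + 1) + 1 = 2 * c + 3 by ring,
        show (2:ℝ) * (n + 1) + 2 * c + 1 = 2 * n + 2 * c + 3 by ring]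
    rw [mul_comm ((2:ℝ) * c + 3)]
    rw [mul_div_mul_right _ _ h1]

lemma auxProd_zero (k : ℕ) : auxProd 0 k * ((2 * k + 1)‼ : ℝ) = 2 ^ k * (k ! : ℝ) := by
  induction k with
  | zero => simp [auxProd]
  | succ k ih =>
    have hd : (2 * (k + 1) + 1)‼ = (2 * k + 3) * (2 * k + 1)‼ := by
      have : 2 * (k + 1) + 1 = (2 * k + 1) + 2 := by ring
      rw [this, Nat.doubleFactorial_add_two]
    rw [hd, auxProd_succ]
    have h1 : (2 * (k : ℝ) + 3) ≠ 0 := by positivity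
    push_cast
    rw [Nat.factorial_succ]
    push_cast
    norm_num
    have h2 : (2 * (k:ℝ) + 2) / (2 * (k:ℝ) + 3) * (2 * (k:ℝ) + 3) = 2 * k + 2 :=
      div_mul_cancel₀ _ h1
    calc auxProd 0 k * ((2 * (k:ℝ) + 2) / (2 * k + 3)) * ((2 * k + 3) * ((2 * k + 1)‼ : ℝ))
        = auxProd 0 k * ((2 * k + 1)‼ : ℝ) * ((2 * (k:ℝ) + 2) / (2 * k + 3) * (2 * k + 3)) := by
          ring
      _ = 2 ^ k * (k ! : ℝ) * (2 * k + 2) := by rw [h2, ih]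
      _ = 2 ^ (k + 1) * (((k:ℝ) + 1) * (k ! : ℝ)) := by ring

theorem sum_identity_substituted (n : ℕ) :
    ∑ k ∈ Finset.range (n + 1),
        (-1 : ℝ) ^ k * 2 ^ k * (k ! : ℝ) * (n.choose k : ℝ) / ((2 * k + 1)‼ : ℝ) =
      1 / (2 * n + 1) := by
  have term : ∀ k ∈ Finset.range (n + 1),
      (-1 : ℝ) ^ k * 2 ^ k * (k ! : ℝ) * (n.choose k : ℝ) / ((2 * k + 1)‼ : ℝ)
      = (-1 : ℝ) ^ k * (n.choose k : ℝ) * auxProd 0 k := by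
    intro k _
    have hd : ((2 * k + 1)‼ : ℝ) ≠ 0 := by positivity
    rw [div_eq_iff hd]
    linear_combination (-((-1 : ℝ) ^ k * (n.choose k : ℝ))) * auxProd_zero k
  rw [Finset.sum_congr rfl term, sum_auxProd n 0]
  norm_num
end
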